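/- Let B > 0, τ ∈ (0, 1), C₀ > 0, R₀ > 0, and let u : E → ℝ satisfy |u(x) − 1 + B/‖x‖| ≤ C₀ ‖x‖^{−1−τ} for all x with ‖x‖ ≥ R₀. Then there exist constants C > 0, R₁ ≥ R₀ and T > 0 such that for every t ≥ T and every x ∈ E with ‖x‖ ≥ R₁ and u(x) = 1 − 1/t, one has | ‖x‖ − B t | ≤ C t^{1−τ}. -/

import Mathlib

/-- If `u = 1 − B/‖x‖ + O(‖x‖^{-1-τ})` at infinity, then on the level
set `{u = 1 − 1/t}` one has `‖x‖ = Bt + O(t^{1-τ})`. -/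
theorem level_set_radius_estimate (B τ C₀ R₀ : ℝ) (hB : 0 < B)
    (hτ : τ ∈ Set.Ioo (0 : ℝ) 1) (hC₀ : 0 < C₀) (hR₀ : 0 < R₀)
    (u : EuclideanSpace ℝ (Fin 3) → ℝ)
    (hu : ∀ x : EuclideanSpace ℝ (Fin 3), R₀ ≤ ‖x‖ →
      |u x - 1 + B / ‖x‖| ≤ C₀ * ‖x‖ ^ (-1 - τ)) :
    ∃ C > (0 : ℝ), ∃ R₁ ≥ R₀, ∃ T > (0 : ℝ), ∀ t : ℝ, T ≤ t →
      ∀ x : EuclideanSpace ℝ (Fin 3), R₁ ≤ ‖x‖ → u x = 1 - 1 / t →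
        |‖x‖ - B * t| ≤ C * t ^ (1 - τ) := by
  obtain ⟨hτ0, hτ1⟩ := hτ
  refine ⟨C₀ * (2 / B) ^ τ, by positivity,
    max R₀ ((2 * C₀ / B) ^ (1 / τ)), le_max_left _ _, 1, one_pos, ?_⟩
  intro t ht x hx hux
  have hxR₀ : R₀ ≤ ‖x‖ := le_trans (le_max_left _ _) hx
  have hr0 : (0:ℝ) < ‖x‖ := lt_of_lt_of_le hR₀ hxR₀
  have ht0 : (0:ℝ) < t := lt_of_lt_of_le one_pos ht
  set r := ‖x‖ with hr
  have key : |B / r - 1 / t| ≤ C₀ * r ^ (-1 - τ) := by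
    have h := hu x hxR₀
    rw [hux] at h
    have : (1 - 1 / t) - 1 + B / r = B / r - 1 / t := by ring
    rwa [this] at h
  have hbase : (0:ℝ) < 2 * C₀ / B := by positivity
  have hrpow : (2 * C₀ / B) ^ (1 / τ) ≤ r := le_trans (le_max_right _ _) hx
  have h1 : 2 * C₀ / B ≤ r ^ τ := by
    have h2 := Real.rpow_le_rpow (Real.rpow_nonneg hbase.le _) hrpow hτ0.le
    rwa [← Real.rpow_mul hbase.le, one_div_mul_cancel hτ0.ne', Real.rpow_one] at h2
  have hrτ0 : (0:ℝ) < r ^ τ := Real.rpow_pos_of_pos hr0 _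
  have hsplit : r ^ (-1 - τ) = r⁻¹ * (r ^ τ)⁻¹ := by
    rw [show (-1 - τ) = (-1) + (-τ) by ring, Real.rpow_add hr0, Real.rpow_neg_one,
      Real.rpow_neg hr0.le]
  -- C₀ * r^{-1-τ} ≤ (B/2)/r
  have hsmall : C₀ * r ^ (-1 - τ) ≤ (B / 2) / r := by
    rw [hsplit]
    have hinv1 : (r ^ τ)⁻¹ ≤ (2 * C₀ / B)⁻¹ := inv_anti₀ hbase h1
    have : C₀ * (r ^ τ)⁻¹ ≤ B / 2 := by
      calc C₀ * (r ^ τ)⁻¹ ≤ C₀ * (2 * C₀ / B)⁻¹ :=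
            mul_le_mul_of_nonneg_left hinv1 hC₀.le
        _ = B / 2 := by field_simp
    calc C₀ * (r⁻¹ * (r ^ τ)⁻¹) = (C₀ * (r ^ τ)⁻¹) * r⁻¹ := by ring
      _ ≤ (B / 2) * r⁻¹ := by
          apply mul_le_mul_of_nonneg_right this (by positivity)
      _ = (B / 2) / r := by ring
  -- lower bound r ≥ (B/2) t
  have hlow : (B / 2) * t ≤ r := by
    have h3 : B / r - 1 / t ≤ C₀ * r ^ (-1 - τ) := (abs_le.mp key).2
    have h4 : (B / 2) / r ≤ 1 / t := by
      have : B / r - (B / 2) / r ≤ 1 / t := by linarith [le_trans h3 hsmall]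
      have heq : B / r - (B / 2) / r = (B / 2) / r := by field_simp; ring
      linarith [heq ▸ this]
    have := (div_le_div_iff₀ hr0 ht0).mp h4
    linarith
  -- main estimate
  have habs : |r - B * t| ≤ t * C₀ * (r ^ τ)⁻¹ := by
    have heq : r - B * t = t * r * (1 / t - B / r) := by field_simp
    have : |r - B * t| = (t * r) * |1 / t - B / r| := by
      rw [heq, abs_mul, abs_of_nonneg (by positivity : (0:ℝ) ≤ t * r)]
    rw [this, abs_sub_comm]
    calc (t * r) * |B / r - 1 / t| ≤ (t * r) * (C₀ * r ^ (-1 - τ)) := by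
          apply mul_le_mul_of_nonneg_left key (by positivity)
      _ = t * C₀ * (r ^ τ)⁻¹ := by rw [hsplit]; field_simp
  have hbt0 : (0:ℝ) < (B / 2) * t := by positivity
  have hmono : ((B / 2) * t) ^ τ ≤ r ^ τ := Real.rpow_le_rpow hbt0.le hlow hτ0.le
  have hbtτ0 : (0:ℝ) < ((B / 2) * t) ^ τ := Real.rpow_pos_of_pos hbt0 _
  have hinv : (r ^ τ)⁻¹ ≤ (((B / 2) * t) ^ τ)⁻¹ :=
    inv_anti₀ hbtτ0 hmono
  calc |r - B * t| ≤ t * C₀ * (r ^ τ)⁻¹ := habs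
    _ ≤ t * C₀ * (((B / 2) * t) ^ τ)⁻¹ := by
        apply mul_le_mul_of_nonneg_left hinv (by positivity)
    _ = C₀ * (2 / B) ^ τ * t ^ (1 - τ) := by
        rw [Real.mul_rpow (by positivity) ht0.le, mul_inv,
          show ((B / 2) ^ τ)⁻¹ = (2 / B) ^ τ by
            rw [← Real.inv_rpow (by positivity), inv_div],
          show t ^ (1 - τ) = t * (t ^ τ)⁻¹ by
            rw [show (1 - τ) = 1 + (-τ) by ring, Real.rpow_add ht0, Real.rpow_one,
              Real.rpow_neg ht0.le]]
        ring
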